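/- Let (X,T) be a flow on a compact, locally connected Hausdorff space X. Then the regionally proximal relation S_rp of (X,T) is monotone, i.e. for every x in X the set {y : (x,y) in S_rp} is connected. -/

import Mathlib

open Topology

/-- The regionally proximal relation of a flow given by an action of a topological
group `T` on a compact Hausdorff space `X`:
`S_rp = ⋂_{α ∈ 𝒰_X} closure (α T)` where `𝒰_X` is the collection of all neighbourhoods
of the diagonal (the unique uniformity on `X`) and
`α T = ⋃_{t ∈ T} {(t • x, t • y) | (x, y) ∈ α}`. -/
def regionallyProximal (T : Type*) {X : Type*} [TopologicalSpace X] [Group T]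
    [MulAction T X] : Set (X × X) :=
  ⋂ α ∈ {s : Set (X × X) | s ∈ 𝓝ˢ (Set.diagonal X)},
    closure (⋃ t : T, (fun p : X × X => (t • p.1, t • p.2)) '' α)

section Aux

open Set Filter

variable {T X : Type*} [TopologicalSpace X] [Group T] [MulAction T X]

/-- The orbit of a relation under the diagonal action. -/
def relOrb (T : Type*) {X : Type*} [Group T] [MulAction T X] (α : Set (X × X)) :
    Set (X × X) :=
  ⋃ t : T, (fun p : X × X => (t • p.1, t • p.2)) '' α

lemma mem_relOrb {α : Set (X × X)} {a b : X} :
    (a, b) ∈ relOrb T α ↔ ∃ t : T, (t⁻¹ • a, t⁻¹ • b) ∈ α := by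
  constructor
  · intro h
    simp only [relOrb, Set.mem_iUnion, Set.mem_image] at h
    obtain ⟨t, p, hp, hpe⟩ := h
    have h1 : t • p.1 = a := congrArg Prod.fst hpe
    have h2 : t • p.2 = b := congrArg Prod.snd hpe
    refine ⟨t, ?_⟩
    have hpeq : (t⁻¹ • a, t⁻¹ • b) = p := by
      rw [← h1, ← h2, inv_smul_smul, inv_smul_smul]
    rwa [hpeq]
  · rintro ⟨t, ht⟩
    simp only [relOrb, mem_iUnion, mem_image]
    exact ⟨t, (t⁻¹ • a, t⁻¹ • b), ht, by simp⟩

lemma relOrb_mono {α γ : Set (X × X)} (h : α ⊆ γ) : relOrb T α ⊆ relOrb T γ :=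
  Set.iUnion_mono fun _ => Set.image_mono h

lemma mem_relOrb_self {α : Set (X × X)} (hd : Set.diagonal X ⊆ α) (z : X) :
    (z, z) ∈ relOrb T α :=
  mem_relOrb.2 ⟨1, hd (by simp [Set.mem_diagonal_iff])⟩

lemma mem_regionallyProximal_iff {p : X × X} [TopologicalSpace T] :
    p ∈ regionallyProximal T ↔
      ∀ α ∈ 𝓝ˢ (Set.diagonal X), p ∈ closure (relOrb T α) := by
  simp [regionallyProximal, relOrb]

variable [TopologicalSpace T] [ContinuousSMul T X]

lemma relOrb_section_preconnected {β : Set (X × X)} (hd : Set.diagonal X ⊆ β)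
    (hc : ∀ z : X, IsPreconnected {y | (z, y) ∈ β}) (z : X) :
    IsPreconnected {y | (z, y) ∈ relOrb T β} := by
  apply isPreconnected_of_forall z
  intro y hy
  obtain ⟨t, ht⟩ := mem_relOrb.1 hy
  refine ⟨(t • ·) '' {w | (t⁻¹ • z, w) ∈ β}, ?_, ?_, ?_, ?_⟩
  · rintro _ ⟨w, hw, rfl⟩
    exact mem_relOrb.2 ⟨t, by simpa using hw⟩
  · exact ⟨t⁻¹ • z, hd (by simp [Set.mem_diagonal_iff]), smul_inv_smul t z⟩
  · exact ⟨t⁻¹ • y, ht, smul_inv_smul t y⟩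
  · exact (hc (t⁻¹ • z)).image _ (continuous_const_smul t).continuousOn

lemma exists_conn_entourage [LocallyConnectedSpace X] {α : Set (X × X)}
    (hα : α ∈ 𝓝ˢ (Set.diagonal X)) :
    ∃ β, β ⊆ α ∧ β ∈ 𝓝ˢ (Set.diagonal X) ∧
      ∀ z : X, IsPreconnected {y | (z, y) ∈ β} := by
  have h : ∀ z : X, ∃ U : Set X, IsOpen U ∧ z ∈ U ∧ IsPreconnected U ∧ U ×ˢ U ⊆ α := by
    intro z
    have hz : α ∈ 𝓝 (z, z) := mem_nhdsSet_iff_forall.1 hα (z, z) rfl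
    rw [nhds_prod_eq] at hz
    obtain ⟨s, hs, t, ht, hst⟩ := Filter.mem_prod_iff.1 hz
    obtain ⟨V, hVsub, hVo, hzV, hVc⟩ :=
      locallyConnectedSpace_iff_subsets_isOpen_isConnected.1 ‹_› z (s ∩ t)
        (Filter.inter_mem hs ht)
    refine ⟨V, hVo, hzV, hVc.isPreconnected, ?_⟩
    exact (Set.prod_mono (hVsub.trans Set.inter_subset_left)
      (hVsub.trans Set.inter_subset_right)).trans hst
  choose U hUo hUz hUc hUα using h
  refine ⟨⋃ z, U z ×ˢ U z, Set.iUnion_subset hUα, ?_, ?_⟩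
  · refine (isOpen_iUnion fun z => (hUo z).prod (hUo z)).mem_nhdsSet.2 ?_
    rintro ⟨a, b⟩ hab
    have : a = b := hab
    exact Set.mem_iUnion.2 ⟨a, hUz a, this ▸ hUz a⟩
  · intro z
    apply isPreconnected_of_forall z
    intro y hy
    obtain ⟨w, hw⟩ := Set.mem_iUnion.1 hy
    refine ⟨U w, ?_, hw.1, hw.2, hUc w⟩
    intro u hu
    exact Set.mem_iUnion.2 ⟨w, hw.1, hu⟩

variable [CompactSpace X] [T2Space X]

lemma aux_core {β : Set (X × X)} (hd : Set.diagonal X ⊆ β)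
    (hc : ∀ z : X, IsPreconnected {y | (z, y) ∈ β}) {x : X}
    {U V : Set X} (hU : IsOpen U) (hV : IsOpen V) (hUV : Disjoint U V)
    (hxU : x ∈ U) {c : X} (hcQ : (x, c) ∈ closure (relOrb T β)) (hcV : c ∈ V) :
    ∃ z, (x, z) ∈ closure (relOrb T β) ∧ z ∉ U ∪ V := by
  set K : Set X := (U ∪ V)ᶜ with hK
  have hKclosed : IsClosed K := (hU.union hV).isClosed_compl
  have hne : ∀ W ∈ 𝓝 x, ((W ×ˢ K) ∩ relOrb T β).Nonempty := by
    intro W hW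
    have hN : (W ∩ U) ×ˢ V ∈ 𝓝 (x, c) :=
      prod_mem_nhds (Filter.inter_mem hW (hU.mem_nhds hxU)) (hV.mem_nhds hcV)
    obtain ⟨p, hp1, hp2⟩ := mem_closure_iff_nhds.1 hcQ _ hN
    have hS : IsPreconnected {y | (p.1, y) ∈ relOrb T β} :=
      relOrb_section_preconnected hd hc p.1
    have hx' : p.1 ∈ {y | (p.1, y) ∈ relOrb T β} := mem_relOrb_self hd p.1
    have hy' : p.2 ∈ {y | (p.1, y) ∈ relOrb T β} := hp2
    -- find a point of the section outside U ∪ V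
    have : ∃ z', z' ∈ {y | (p.1, y) ∈ relOrb T β} ∧ z' ∈ K := by
      by_contra hcontra
      push_neg at hcontra
      have hsub : {y | (p.1, y) ∈ relOrb T β} ⊆ U ∪ V := by
        intro y hyS
        by_contra hyn
        exact (hcontra y hyS) hyn
      obtain ⟨q, hq⟩ := hS U V hU hV hsub ⟨p.1, hx', hp1.1.2⟩ ⟨p.2, hy', hp1.2⟩
      exact Set.disjoint_left.1 hUV hq.2.1 hq.2.2
    obtain ⟨z', hz'S, hz'K⟩ := this
    exact ⟨(p.1, z'), ⟨hp1.1.1, hz'K⟩, hz'S⟩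
  set G : Filter (X × X) := ((𝓝 x) ×ˢ (𝓟 K)) ⊓ 𝓟 (relOrb T β) with hG
  have hGne : G.NeBot := by
    rw [hG, Filter.inf_principal_neBot_iff]
    intro s hs
    obtain ⟨W, hW, t, ht, hsub⟩ := Filter.mem_prod_iff.1 hs
    obtain ⟨p, hpWK, hporb⟩ := hne W hW
    exact ⟨p, hsub ⟨hpWK.1, Filter.mem_principal.1 ht hpWK.2⟩, hporb⟩
  obtain ⟨p, -, hp⟩ := isCompact_univ.exists_clusterPt (f := G)
    (Filter.le_principal_iff.2 Filter.univ_mem)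
  have hp1 : p ∈ closure (relOrb T β) :=
    mem_closure_iff_clusterPt.2 (hp.mono inf_le_right)
  have hp2 : p.2 ∈ K := by
    have hle : G ≤ 𝓟 (Set.univ ×ˢ K) := by
      refine le_trans inf_le_left ?_
      rw [← Filter.prod_principal_principal]
      exact Filter.prod_mono (Filter.le_principal_iff.2 Filter.univ_mem) le_rfl
    have hcl : p ∈ closure (Set.univ ×ˢ K) :=
      mem_closure_iff_clusterPt.2 (hp.mono hle)
    rw [closure_prod_eq] at hcl
    simpa [hKclosed.closure_eq] using hcl.2
  have hp0 : p.1 = x := by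
    have h1 : Filter.map Prod.fst (𝓝 p ⊓ G) ≤ 𝓝 p.1 ⊓ 𝓝 x := by
      refine le_inf ?_ ?_
      · exact (Filter.map_mono inf_le_left).trans (continuous_fst.tendsto p)
      · exact (Filter.map_mono inf_le_right).trans
          ((Filter.map_mono inf_le_left).trans Filter.tendsto_fst)
    haveI : (𝓝 p ⊓ G).NeBot := hp
    haveI : (Filter.map Prod.fst (𝓝 p ⊓ G)).NeBot := Filter.NeBot.map ‹_› _
    exact eq_of_nhds_neBot (Filter.neBot_of_le h1)
  refine ⟨p.2, ?_, hp2⟩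
  have : (p.1, p.2) ∈ closure (relOrb T β) := by simpa using hp1
  rwa [hp0] at this

lemma Q_preconnected {β : Set (X × X)} (hd : Set.diagonal X ⊆ β)
    (hc : ∀ z : X, IsPreconnected {y | (z, y) ∈ β}) (x : X) :
    IsPreconnected {y | (x, y) ∈ closure (relOrb T β)} := by
  set Q : Set X := {y | (x, y) ∈ closure (relOrb T β)} with hQ
  have hQclosed : IsClosed Q := by
    have : Continuous fun y : X => ((x, y) : X × X) := by fun_prop
    exact isClosed_closure.preimage this
  rw [isPreconnected_iff_subset_of_fully_disjoint_closed hQclosed]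
  intro u v hu hv hQuv huv
  obtain ⟨U, V, hUo, hVo, huU, hvV, hUV⟩ := normal_separation hu hv huv
  by_contra hcon
  push_neg at hcon
  obtain ⟨hnu, hnv⟩ := hcon
  obtain ⟨a, haQ, hau⟩ := Set.not_subset.1 hnu
  obtain ⟨b, hbQ, hbv⟩ := Set.not_subset.1 hnv
  have haV : a ∈ V := hvV ((hQuv haQ).resolve_left hau)
  have hbU : b ∈ U := huU ((hQuv hbQ).resolve_right hbv)
  have hxQ : x ∈ Q := subset_closure (mem_relOrb_self hd x)
  rcases hQuv hxQ with hxu | hxv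
  · obtain ⟨z, hz1, hz2⟩ := aux_core hd hc hUo hVo hUV (huU hxu) haQ haV
    exact hz2 (Set.union_subset_union huU hvV (hQuv hz1))
  · obtain ⟨z, hz1, hz2⟩ := aux_core hd hc hVo hUo hUV.symm (hvV hxv) hbQ hbU
    rcases hQuv hz1 with h | h
    · exact hz2 (Set.mem_union_right _ (huU h))
    · exact hz2 (Set.mem_union_left _ (hvV h))

end Aux

/-- For a flow `(X,T)` on a compact, locally connected Hausdorff space,
the regionally proximal relation `S_rp` is monotone: for every `x ∈ X` the set
`{y | (x,y) ∈ S_rp}` is connected. -/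
theorem stmt2 {T X : Type*} [TopologicalSpace X] [CompactSpace X] [T2Space X]
    [LocallyConnectedSpace X] [TopologicalSpace T] [Group T] [IsTopologicalGroup T]
    [MulAction T X] [ContinuousSMul T X] :
    ∀ x : X, IsConnected {y | (x, y) ∈ regionallyProximal T (X := X)} := by
  intro x
  have hxS : x ∈ {y | (x, y) ∈ regionallyProximal T (X := X)} := by
    rw [Set.mem_setOf_eq, mem_regionallyProximal_iff]
    exact fun α hα => subset_closure (mem_relOrb_self (subset_of_mem_nhdsSet hα) x)
  refine ⟨⟨x, hxS⟩, ?_⟩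
  set ι := {β : Set (X × X) // β ∈ 𝓝ˢ (Set.diagonal X) ∧
      ∀ z : X, IsPreconnected {y | (z, y) ∈ β}} with hι
  haveI : Nonempty ι := by
    obtain ⟨β, -, hβn, hβc⟩ := exists_conn_entourage (Filter.univ_mem (f := 𝓝ˢ (Set.diagonal X)))
    exact ⟨⟨β, hβn, hβc⟩⟩
  set Q : ι → Set X := fun i => {y | (x, y) ∈ closure (relOrb T i.1)} with hQdef
  have hQclosed : ∀ i, IsClosed (Q i) := by
    intro i
    have : Continuous fun y : X => ((x, y) : X × X) := by fun_prop
    exact isClosed_closure.preimage this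
  have hSQ : {y | (x, y) ∈ regionallyProximal T (X := X)} = ⋂ i, Q i := by
    ext y
    simp only [Set.mem_setOf_eq, mem_regionallyProximal_iff, Set.mem_iInter]
    constructor
    · exact fun h i => h i.1 i.2.1
    · intro h α hα
      obtain ⟨β, hβα, hβn, hβc⟩ := exists_conn_entourage hα
      exact closure_mono (relOrb_mono hβα) (h ⟨β, hβn, hβc⟩)
  rw [hSQ]
  have hdir : Directed (· ⊇ ·) Q := by
    intro i j
    obtain ⟨β, hβα, hβn, hβc⟩ := exists_conn_entourage (Filter.inter_mem i.2.1 j.2.1)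
    refine ⟨⟨β, hβn, hβc⟩, ?_, ?_⟩
    · exact fun y hy =>
        closure_mono (relOrb_mono (hβα.trans Set.inter_subset_left)) hy
    · exact fun y hy =>
        closure_mono (relOrb_mono (hβα.trans Set.inter_subset_right)) hy
  have hQx : ∀ i, x ∈ Q i := fun i =>
    subset_closure (mem_relOrb_self (subset_of_mem_nhdsSet i.2.1) x)
  rw [isPreconnected_iff_subset_of_fully_disjoint_closed (isClosed_iInter hQclosed)]
  intro u v hu hv hsub huv
  obtain ⟨U, V, hUo, hVo, huU, hvV, hUV⟩ := normal_separation hu hv huv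
  obtain ⟨i, hi⟩ := exists_subset_nhds_of_isCompact' hdir
    (fun i => (hQclosed i).isCompact) hQclosed
    (U := U ∪ V)
    (fun y hy => (hUo.union hVo).mem_nhds (Set.union_subset_union huU hvV (hsub hy)))
  have hQi : IsPreconnected (Q i) :=
    Q_preconnected (subset_of_mem_nhdsSet i.2.1) i.2.2 x
  rcases hQi.subset_or_subset hUo hVo hUV hi with hQU | hQV
  · left
    intro y hy
    rcases hsub hy with h | h
    · exact h
    · exact absurd (hQU (Set.iInter_subset Q i hy))
        (Set.disjoint_right.1 hUV (hvV h))
  · right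
    intro y hy
    rcases hsub hy with h | h
    · exact absurd (hQV (Set.iInter_subset Q i hy))
        (Set.disjoint_left.1 hUV (huU h))
    · exact h
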